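/- The second derivative of E(s, φ) = (cos 2φ − s cos 2φ)·erf(1/√(2s)) + √(2s/π)·cos(2φ)·e^{−1/(2s)} + sin²φ with respect to s satisfies ∂²E/∂s² = (e^{−1/(2s)}/√(2π s⁵))·cos(2φ) for s > 0. -/

import Mathlib

open Real

noncomputable def erf (t : ℝ) : ℝ :=
  (2 / Real.sqrt π) * ∫ u in (0:ℝ)..t, Real.exp (-(u ^ 2))

lemma hasDerivAt_erf (t : ℝ) :
    HasDerivAt erf (2 / Real.sqrt π * Real.exp (-(t ^ 2))) t := by
  have hc : Continuous fun u : ℝ => Real.exp (-(u ^ 2)) := by continuity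
  have h : HasDerivAt (fun x => ∫ u in (0:ℝ)..x, Real.exp (-(u ^ 2)))
      (Real.exp (-(t ^ 2))) t :=
    intervalIntegral.integral_hasDerivAt_right (hc.intervalIntegrable 0 t)
      hc.aestronglyMeasurable.stronglyMeasurableAtFilter hc.continuousAt
  show HasDerivAt (fun x => 2 / Real.sqrt π * ∫ u in (0:ℝ)..x, Real.exp (-(u ^ 2))) _ t
  exact h.const_mul (2 / Real.sqrt π)

noncomputable def Egain (s φ : ℝ) : ℝ :=
  (cos (2 * φ) - s * cos (2 * φ)) * erf (1 / Real.sqrt (2 * s))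
    + Real.sqrt (2 * s / π) * cos (2 * φ) * Real.exp (-(1 / (2 * s)))
    + sin φ ^ 2

noncomputable def E1 (φ s : ℝ) : ℝ :=
  cos (2 * φ) * (2 * Real.exp (-(1 / (2 * s))) / (Real.sqrt π * Real.sqrt (2 * s))
    - erf (1 / Real.sqrt (2 * s)))

lemma hasDerivAt_sqrt2s {s : ℝ} (hs : 0 < s) :
    HasDerivAt (fun x : ℝ => Real.sqrt (2 * x)) (1 / (2 * Real.sqrt (2 * s)) * 2) s := by
  have h : HasDerivAt (fun x : ℝ => 2 * x) 2 s := by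
    simpa using (hasDerivAt_id s).const_mul 2
  exact (Real.hasDerivAt_sqrt (by positivity)).comp s h

lemma hasDerivAt_inner {s : ℝ} (hs : 0 < s) :
    HasDerivAt (fun x : ℝ => 1 / Real.sqrt (2 * x))
      (-(1 / (2 * Real.sqrt (2 * s)) * 2) / Real.sqrt (2 * s) ^ 2) s := by
  have hq : Real.sqrt (2 * s) ≠ 0 := by positivity
  have h' : HasDerivAt (fun x : ℝ => (Real.sqrt (2 * x))⁻¹)
      (-(1 / (2 * Real.sqrt (2 * s)) * 2) / Real.sqrt (2 * s) ^ 2) s := (hasDerivAt_sqrt2s hs).inv hq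
  simp only [one_div] at h' ⊢
  exact h'

lemma hasDerivAt_expinner {s : ℝ} (hs : 0 < s) :
    HasDerivAt (fun x : ℝ => Real.exp (-(1 / (2 * x))))
      (Real.exp (-(1 / (2 * s))) * (2 / (2 * s) ^ 2)) s := by
  have h2 : HasDerivAt (fun x : ℝ => 2 * x) 2 s := by
    simpa using (hasDerivAt_id s).const_mul 2
  have h : HasDerivAt (fun x : ℝ => -(1 / (2 * x))) (2 / (2 * s) ^ 2) s := by
    have h' : HasDerivAt (fun x : ℝ => -(2 * x)⁻¹) (-(-2 / (2 * s) ^ 2)) s :=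
      (h2.inv (by positivity)).neg
    rw [show (2:ℝ) / (2 * s) ^ 2 = -(-2 / (2 * s) ^ 2) by ring]
    simp only [one_div]
    exact h'
  exact h.exp

lemma hasDerivAt_Egain (φ : ℝ) {s : ℝ} (hs : 0 < s) :
    HasDerivAt (fun s => Egain s φ) (E1 φ s) s := by
  have h2s : (0:ℝ) < 2 * s := by positivity
  have hq : Real.sqrt (2 * s) ≠ 0 := by positivity
  have hfun : (fun s => Egain s φ)
      = fun s => (cos (2 * φ) - s * cos (2 * φ)) * erf (1 / Real.sqrt (2 * s))
        + Real.sqrt (2 * s) / Real.sqrt π * cos (2 * φ) * Real.exp (-(1 / (2 * s)))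
        + sin φ ^ 2 := by
    funext x
    rcases le_or_gt 0 x with hx | hx
    · simp [Egain, Real.sqrt_div (by positivity : (0:ℝ) ≤ 2 * x)]
    · have h1 : Real.sqrt (2 * x / π) = 0 :=
        Real.sqrt_eq_zero_of_nonpos (by
          have := Real.pi_pos
          exact le_of_lt (div_neg_of_neg_of_pos (by linarith) this))
      have h2 : Real.sqrt (2 * x) = 0 :=
        Real.sqrt_eq_zero_of_nonpos (by linarith)
      simp [Egain, h1, h2]
  rw [hfun]
  -- pieces
  have herf : HasDerivAt (fun x : ℝ => erf (1 / Real.sqrt (2 * x)))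
      (2 / Real.sqrt π * Real.exp (-((1 / Real.sqrt (2 * s)) ^ 2))
        * (-(1 / (2 * Real.sqrt (2 * s)) * 2) / Real.sqrt (2 * s) ^ 2)) s :=
    (hasDerivAt_erf _).comp s (hasDerivAt_inner hs)
  have hlin : HasDerivAt (fun x : ℝ => cos (2 * φ) - x * cos (2 * φ))
      (-(1 * cos (2 * φ))) s := by
    exact ((hasDerivAt_id s).mul_const (cos (2*φ))).const_sub (cos (2*φ))
  have hterm1 := hlin.mul herf
  have hterm2 :=
    (((hasDerivAt_sqrt2s hs).div_const (Real.sqrt π)).mul_const (cos (2 * φ))).mul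
      (hasDerivAt_expinner hs)
  have hsum := (hterm1.add hterm2).add (hasDerivAt_const s (sin φ ^ 2))
  refine hsum.congr_deriv ?_
  -- algebra
  have hsq : ((1:ℝ) / Real.sqrt (2 * s)) ^ 2 = 1 / (2 * s) := by
    rw [div_pow, one_pow, Real.sq_sqrt h2s.le]
  rw [E1, hsq]
  have hq2 : Real.sqrt (2 * s) ^ 2 = 2 * s := Real.sq_sqrt h2s.le
  have hqpos : 0 < Real.sqrt (2 * s) := Real.sqrt_pos.mpr h2s
  have hπ : Real.sqrt π ≠ 0 := by positivity
  generalize hQ : Real.sqrt (2 * s) = q at *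
  have hs' : s = q ^ 2 / 2 := by linarith
  subst hs'
  have hqne : q ≠ 0 := ne_of_gt hqpos
  field_simp
  ring

lemma hasDerivAt_E1 (φ : ℝ) {s : ℝ} (hs : 0 < s) :
    HasDerivAt (E1 φ)
      (Real.exp (-(1 / (2 * s))) / Real.sqrt (2 * π * s ^ 5) * cos (2 * φ)) s := by
  have h2s : (0:ℝ) < 2 * s := by positivity
  have hqpos : 0 < Real.sqrt (2 * s) := Real.sqrt_pos.mpr h2s
  have hπ' : (0:ℝ) < Real.sqrt π := Real.sqrt_pos.mpr Real.pi_pos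
  have hnum : HasDerivAt (fun x : ℝ => 2 * Real.exp (-(1 / (2 * x))))
      (2 * (Real.exp (-(1 / (2 * s))) * (2 / (2 * s) ^ 2))) s :=
    (hasDerivAt_expinner hs).const_mul 2
  have hden : HasDerivAt (fun x : ℝ => Real.sqrt π * Real.sqrt (2 * x))
      (Real.sqrt π * (1 / (2 * Real.sqrt (2 * s)) * 2)) s :=
    (hasDerivAt_sqrt2s hs).const_mul (Real.sqrt π)
  have hdiv := hnum.div hden (by positivity)
  have herf : HasDerivAt (fun x : ℝ => erf (1 / Real.sqrt (2 * x)))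
      (2 / Real.sqrt π * Real.exp (-((1 / Real.sqrt (2 * s)) ^ 2))
        * (-(1 / (2 * Real.sqrt (2 * s)) * 2) / Real.sqrt (2 * s) ^ 2)) s :=
    (hasDerivAt_erf _).comp s (hasDerivAt_inner hs)
  have hall := (hdiv.sub herf).const_mul (cos (2 * φ))
  have heq : HasDerivAt (E1 φ) (cos (2 * φ) *
      ((2 * (Real.exp (-(1 / (2 * s))) * (2 / (2 * s) ^ 2)) * (Real.sqrt π * Real.sqrt (2 * s))
          - 2 * Real.exp (-(1 / (2 * s))) * (Real.sqrt π * (1 / (2 * Real.sqrt (2 * s)) * 2)))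
          / (Real.sqrt π * Real.sqrt (2 * s)) ^ 2
        - 2 / Real.sqrt π * Real.exp (-((1 / Real.sqrt (2 * s)) ^ 2))
            * (-(1 / (2 * Real.sqrt (2 * s)) * 2) / Real.sqrt (2 * s) ^ 2))) s := hall
  convert heq using 1
  have hsq : ((1:ℝ) / Real.sqrt (2 * s)) ^ 2 = 1 / (2 * s) := by
    rw [div_pow, one_pow, Real.sq_sqrt h2s.le]
  rw [hsq]
  have hroot : Real.sqrt (2 * π * s ^ 5) = Real.sqrt π * Real.sqrt (2 * s) * s ^ 2 := by
    rw [show 2 * π * s ^ 5 = (Real.sqrt π * Real.sqrt (2 * s) * s ^ 2) ^ 2 by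
      rw [mul_pow, mul_pow, Real.sq_sqrt Real.pi_pos.le, Real.sq_sqrt h2s.le]; ring]
    exact Real.sqrt_sq (by positivity)
  rw [hroot]
  have hq2 : Real.sqrt (2 * s) ^ 2 = 2 * s := Real.sq_sqrt h2s.le
  generalize hQ : Real.sqrt (2 * s) = q at *
  have hs' : s = q ^ 2 / 2 := by linarith
  subst hs'
  have hqne : q ≠ 0 := ne_of_gt hqpos
  have hπne : Real.sqrt π ≠ 0 := ne_of_gt hπ'
  field_simp
  ring

theorem Egain_second_deriv (φ : ℝ) :
    ∀ s : ℝ, 0 < s →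
      deriv (deriv (fun s => Egain s φ)) s
        = Real.exp (-(1 / (2 * s))) / Real.sqrt (2 * π * s ^ 5) * cos (2 * φ) := by
  intro s hs
  have hev : deriv (fun s => Egain s φ) =ᶠ[nhds s] E1 φ := by
    filter_upwards [isOpen_Ioi.mem_nhds hs] with x hx
    exact (hasDerivAt_Egain φ hx).deriv
  rw [hev.deriv_eq]
  exact (hasDerivAt_E1 φ hs).deriv
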